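/- Let V be a faithful finite-dimensional rational representation of a linear algebraic group G over an algebraically closed field, and let E_G be a principal G-bundle over an irreducible complete variety M with associated vector bundle E_V. If σ is an automorphism of E_G whose induced automorphism of E_V is the identity, then σ is the identity automorphism of E_G. -/

import Mathlib

open AlgebraicGeometry CategoryTheory Opposite Matrix MvPolynomial

universe u

/-- Restriction map of the structure sheaf of a scheme. -/
abbrev sheafRes (X : Scheme.{u}) {U V : X.Opens} (h : V ≤ U) : Γ(X, U) ⟶ Γ(X, V) :=
  X.presheaf.map (homOfLE h).op

/-- Coordinates of an element of `GL n R`: the entries of the matrix together with the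
entries of its inverse. -/
def glCoordsR {R : Type u} [CommRing R] {n : ℕ} (g : GL (Fin n) R) :
    (Fin n × Fin n) ⊕ (Fin n × Fin n) → R :=
  Sum.elim (fun p => (g : Matrix (Fin n) (Fin n) R) p.1 p.2)
    (fun p => ((g⁻¹ : GL (Fin n) R) : Matrix (Fin n) (Fin n) R) p.1 p.2)

/-- The `R`-points of the linear algebraic group `G ⊆ GL n` cut out over `k` by the set
of polynomials `I` (in the matrix entries and the entries of the inverse), where
`φ : k →+* R` is the `k`-algebra structure of `R`. -/
def grpMem {k : Type u} [Field k] {n : ℕ}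
    (I : Set (MvPolynomial ((Fin n × Fin n) ⊕ (Fin n × Fin n)) k))
    {R : Type u} [CommRing R] (φ : k →+* R) (g : GL (Fin n) R) : Prop :=
  ∀ p ∈ I, eval₂ φ (glCoordsR g) p = 0

/-- The matrix of the rational representation defined by the family of polynomials `Q`,
evaluated on a point of `GL n R`. -/
def repMat {k : Type u} [Field k] {n v : ℕ}
    (Q : (Fin v × Fin v) ⊕ (Fin v × Fin v) →
      MvPolynomial ((Fin n × Fin n) ⊕ (Fin n × Fin n)) k)
    {R : Type u} [CommRing R] (φ : k →+* R) (g : GL (Fin n) R) :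
    Matrix (Fin v) (Fin v) R :=
  fun a b => eval₂ φ (glCoordsR g) (Q (Sum.inl (a, b)))

/-- The matrix of the inverse in the rational representation defined by `Q`. -/
def repMatInv {k : Type u} [Field k] {n v : ℕ}
    (Q : (Fin v × Fin v) ⊕ (Fin v × Fin v) →
      MvPolynomial ((Fin n × Fin n) ⊕ (Fin n × Fin n)) k)
    {R : Type u} [CommRing R] (φ : k →+* R) (g : GL (Fin n) R) :
    Matrix (Fin v) (Fin v) R :=
  fun a b => eval₂ φ (glCoordsR g) (Q (Sum.inr (a, b)))

/-- Let `G ⊆ GL n` be a linear algebraic group over an algebraically closed field `k` of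
characteristic zero (cut out by the polynomials `I`, with `R`-points `grpMem I`), let
`ρ` be a faithful finite-dimensional rational representation of `G` (given by the
polynomials `Q`), let `M` be an irreducible complete variety over `k` (an integral
scheme, separated, universally closed and of finite type over `Spec k`), and let `E_G`
be a principal `G`-bundle over `M`, given by a transition cocycle `g i j` with values in
`G` on an open cover `U i`.  Let `σ` be an automorphism of `E_G`, given by local sections
`s i` of the adjoint bundle, i.e. `G`-valued functions with `sᵢ gᵢⱼ = gᵢⱼ sⱼ`.  If the
automorphism of the associated vector bundle `E_V` induced by `σ` (given locally by
`ρ(s i)`) is the identity, then `σ` is the identity automorphism of `E_G`. -/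
theorem automorphism_trivial_of_faithful_rep_trivial
    {k : Type u} [Field k] [IsAlgClosed k] [CharZero k] {n v : ℕ}
    (I : Set (MvPolynomial ((Fin n × Fin n) ⊕ (Fin n × Fin n)) k))
    -- `G` is a subgroup functor of `GL n`:
    (hgrp_one : ∀ (R : Type u) [CommRing R] (φ : k →+* R), grpMem I φ (1 : GL (Fin n) R))
    (hgrp_mul : ∀ (R : Type u) [CommRing R] (φ : k →+* R) (g h : GL (Fin n) R),
      grpMem I φ g → grpMem I φ h → grpMem I φ (g * h))
    (hgrp_inv : ∀ (R : Type u) [CommRing R] (φ : k →+* R) (g : GL (Fin n) R),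
      grpMem I φ g → grpMem I φ g⁻¹)
    (Q : (Fin v × Fin v) ⊕ (Fin v × Fin v) →
      MvPolynomial ((Fin n × Fin n) ⊕ (Fin n × Fin n)) k)
    -- `ρ` is a rational representation of `G` on `V = k^v`:
    (hρ_inv : ∀ (R : Type u) [CommRing R] (φ : k →+* R) (g : GL (Fin n) R),
      grpMem I φ g → repMat Q φ g * repMatInv Q φ g = 1 ∧ repMatInv Q φ g * repMat Q φ g = 1)
    (hρ_one : ∀ (R : Type u) [CommRing R] (φ : k →+* R),
      repMat Q φ (1 : GL (Fin n) R) = 1)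
    (hρ_mul : ∀ (R : Type u) [CommRing R] (φ : k →+* R) (g h : GL (Fin n) R),
      grpMem I φ g → grpMem I φ h → repMat Q φ (g * h) = repMat Q φ g * repMat Q φ h)
    -- `ρ` is faithful:
    (hρ_faithful : ∀ g : GL (Fin n) k, grpMem I (RingHom.id k) g →
      repMat Q (RingHom.id k) g = 1 → g = 1)
    -- `M` is an irreducible complete variety over `k`:
    (X : Scheme.{u}) [IsIntegral X] (f : X ⟶ Spec (CommRingCat.of k))
    [IsSeparated f] [UniversallyClosed f] [LocallyOfFiniteType f]
    -- the structure map `k → Γ(X, U)` of an open subset: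
    (cst : ∀ U : X.Opens, k →+* Γ(X, U))
    (hcst : ∀ U : X.Opens, cst U =
      (sheafRes X (le_top : U ≤ ⊤)).hom.comp ((f.appTop).hom.comp
        ((Scheme.ΓSpecIso (CommRingCat.of k)).inv : CommRingCat.of k ⟶ _).hom))
    -- the principal `G`-bundle `E_G`, as a `G`-valued transition cocycle:
    (ι : Type u) (U : ι → X.Opens) (hcover : ∀ x : X, ∃ i, x ∈ U i)
    (g : ∀ i j : ι, GL (Fin n) Γ(X, U i ⊓ U j))
    (hgG : ∀ i j, grpMem I (cst (U i ⊓ U j)) (g i j))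
    (hg_id : ∀ i, g i i = 1)
    (hg_cocycle : ∀ i j l : ι,
      GeneralLinearGroup.map (sheafRes X (inf_le_left : U i ⊓ U j ⊓ U l ≤ U i ⊓ U j)).hom
          (g i j) *
        GeneralLinearGroup.map (sheafRes X (le_inf (inf_le_left.trans inf_le_right)
          inf_le_right : U i ⊓ U j ⊓ U l ≤ U j ⊓ U l)).hom (g j l) =
      GeneralLinearGroup.map (sheafRes X (inf_le_inf inf_le_left le_rfl :
          U i ⊓ U j ⊓ U l ≤ U i ⊓ U l)).hom (g i l))
    -- the automorphism `σ` of `E_G`, as local `G`-valued sections of the adjoint bundle: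
    (s : ∀ i : ι, GL (Fin n) Γ(X, U i))
    (hsG : ∀ i, grpMem I (cst (U i)) (s i))
    (hs_compat : ∀ i j : ι,
      GeneralLinearGroup.map (sheafRes X (inf_le_left : U i ⊓ U j ≤ U i)).hom (s i) * g i j =
        g i j * GeneralLinearGroup.map (sheafRes X (inf_le_right : U i ⊓ U j ≤ U j)).hom (s j))
    -- the induced automorphism of the associated vector bundle `E_V` is the identity:
    (htriv : ∀ i : ι, repMat Q (cst (U i)) (s i) = 1) :
    -- conclusion: `σ` is the identity automorphism of `E_G`:
    ∀ i : ι, s i = 1 := by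
  
  classical
  intro i
  set φ : k →+* Γ(X, U i) := cst (U i) with hφdef
  set w : (Fin n × Fin n) ⊕ (Fin n × Fin n) → Γ(X, U i) := glCoordsR (s i) with hwdef
  -- the generating set of the ideal of relations
  set S : Set (MvPolynomial ((Fin n × Fin n) ⊕ (Fin n × Fin n)) k) :=
      I ∪ (Set.range fun ab : Fin n × Fin n =>
            (∑ c, MvPolynomial.X (Sum.inl (ab.1, c)) * MvPolynomial.X (Sum.inr (c, ab.2))) -
              C (if ab.1 = ab.2 then 1 else 0))
        ∪ (Set.range fun ab : Fin n × Fin n =>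
            (∑ c, MvPolynomial.X (Sum.inr (ab.1, c)) * MvPolynomial.X (Sum.inl (c, ab.2))) -
              C (if ab.1 = ab.2 then 1 else 0))
        ∪ (Set.range fun ab : Fin v × Fin v =>
            Q (Sum.inl ab) - C (if ab.1 = ab.2 then 1 else 0)) with hSdef
  set J : Ideal (MvPolynomial ((Fin n × Fin n) ⊕ (Fin n × Fin n)) k) := Ideal.span S with hJdef
  -- evaluation at `s i` kills the generators
  have hψS : ∀ p ∈ S, eval₂ φ w p = 0 := by
    intro p hp
    simp only [hSdef, Set.mem_union, Set.mem_range] at hp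
    obtain (((hp | ⟨ab, rfl⟩) | ⟨ab, rfl⟩) | ⟨ab, rfl⟩) := hp
    · exact hsG i p hp
    · have h1 : ((s i : Matrix (Fin n) (Fin n) Γ(X, U i)) *
          ((s i)⁻¹ : GL (Fin n) Γ(X, U i))) ab.1 ab.2 = (1 : Matrix (Fin n) (Fin n) Γ(X, U i)) ab.1 ab.2 := by
        rw [Units.mul_inv]
      rw [Matrix.mul_apply, Matrix.one_apply] at h1
      have : eval₂ φ w ((∑ c, MvPolynomial.X (Sum.inl (ab.1, c)) * MvPolynomial.X (Sum.inr (c, ab.2))) -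
          C (if ab.1 = ab.2 then 1 else 0)) =
          (∑ c, w (Sum.inl (ab.1, c)) * w (Sum.inr (c, ab.2))) - φ (if ab.1 = ab.2 then 1 else 0) := by
        rw [eval₂_sub, eval₂_C]
        congr 1
        rw [eval₂_sum]
        exact Finset.sum_congr rfl fun c _ => by rw [eval₂_mul, eval₂_X, eval₂_X]
      rw [this]
      have hw' : ∀ c, w (Sum.inl (ab.1, c)) = (s i : Matrix (Fin n) (Fin n) Γ(X, U i)) ab.1 c := fun c => rfl
      have hw'' : ∀ c, w (Sum.inr (c, ab.2)) = ((s i)⁻¹ : GL (Fin n) Γ(X, U i)) c ab.2 := fun c => rfl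
      simp only [hw', hw'', h1, apply_ite φ, _root_.map_one, _root_.map_zero]
      split <;> simp
    · have h1 : (((s i)⁻¹ : GL (Fin n) Γ(X, U i)) *
          (s i : Matrix (Fin n) (Fin n) Γ(X, U i))) ab.1 ab.2 = (1 : Matrix (Fin n) (Fin n) Γ(X, U i)) ab.1 ab.2 := by
        rw [Units.inv_mul]
      rw [Matrix.mul_apply, Matrix.one_apply] at h1
      have : eval₂ φ w ((∑ c, MvPolynomial.X (Sum.inr (ab.1, c)) * MvPolynomial.X (Sum.inl (c, ab.2))) -
          C (if ab.1 = ab.2 then 1 else 0)) =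
          (∑ c, w (Sum.inr (ab.1, c)) * w (Sum.inl (c, ab.2))) - φ (if ab.1 = ab.2 then 1 else 0) := by
        rw [eval₂_sub, eval₂_C]
        congr 1
        rw [eval₂_sum]
        exact Finset.sum_congr rfl fun c _ => by rw [eval₂_mul, eval₂_X, eval₂_X]
      rw [this]
      have hw' : ∀ c, w (Sum.inr (ab.1, c)) = ((s i)⁻¹ : GL (Fin n) Γ(X, U i)) ab.1 c := fun c => rfl
      have hw'' : ∀ c, w (Sum.inl (c, ab.2)) = (s i : Matrix (Fin n) (Fin n) Γ(X, U i)) c ab.2 := fun c => rfl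
      simp only [hw', hw'', h1, apply_ite φ, _root_.map_one, _root_.map_zero]
      split <;> simp
    · have h1 : repMat Q φ (s i) ab.1 ab.2 = (1 : Matrix (Fin v) (Fin v) Γ(X, U i)) ab.1 ab.2 := by
        rw [htriv i]
      rw [Matrix.one_apply] at h1
      have : eval₂ φ w (Q (Sum.inl ab) - C (if ab.1 = ab.2 then 1 else 0)) =
          eval₂ φ w (Q (Sum.inl ab)) - φ (if ab.1 = ab.2 then 1 else 0) := by
        rw [eval₂_sub, eval₂_C]
      rw [this]
      have h2 : eval₂ φ w (Q (Sum.inl ab)) = repMat Q φ (s i) ab.1 ab.2 := rfl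
      rw [h2, h1, apply_ite φ, _root_.map_one, _root_.map_zero]
      split <;> simp
  have hJker : J ≤ RingHom.ker (eval₂Hom φ w) := by
    rw [hJdef, Ideal.span_le]
    intro p hp
    exact hψS p hp
  -- Nullstellensatz: the entry polynomials are in the radical of `J`
  have key : ∀ a b : Fin n,
      (MvPolynomial.X (Sum.inl (a, b)) - C (if a = b then 1 else 0) :
        MvPolynomial ((Fin n × Fin n) ⊕ (Fin n × Fin n)) k) ∈ J.radical := by
    intro a b
    rw [← vanishingIdeal_zeroLocus_eq_radical (K := k)]
    intro x hx
    have hx' : ∀ p ∈ S, eval x p = 0 := fun p hp => hx p (Ideal.subset_span hp)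
    -- construct the `k`-point of `GL n`
    have hAB : (Matrix.of fun a b => x (Sum.inl (a, b))) *
        (Matrix.of fun a b => x (Sum.inr (a, b))) = (1 : Matrix (Fin n) (Fin n) k) := by
      ext a' b'
      have := hx' _ (by
        refine Or.inl (Or.inl (Or.inr ⟨(a', b'), rfl⟩)))
      simp only [_root_.map_sub, _root_.map_sum, _root_.map_mul, eval_X, eval_C, sub_eq_zero] at this
      rw [Matrix.mul_apply, Matrix.one_apply]
      simpa using this
    have hBA : (Matrix.of fun a b => x (Sum.inr (a, b))) *
        (Matrix.of fun a b => x (Sum.inl (a, b))) = (1 : Matrix (Fin n) (Fin n) k) := by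
      ext a' b'
      have := hx' _ (by
        refine Or.inl (Or.inr ⟨(a', b'), rfl⟩))
      simp only [_root_.map_sub, _root_.map_sum, _root_.map_mul, eval_X, eval_C, sub_eq_zero] at this
      rw [Matrix.mul_apply, Matrix.one_apply]
      simpa using this
    set g0 : GL (Fin n) k :=
      ⟨Matrix.of fun a b => x (Sum.inl (a, b)), Matrix.of fun a b => x (Sum.inr (a, b)),
        hAB, hBA⟩ with hg0def
    have hcoords : glCoordsR g0 = x := by
      funext p
      cases p with
      | inl q => rfl
      | inr q => rfl
    have hmem : grpMem I (RingHom.id k) g0 := by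
      intro p hp
      rw [hcoords]
      exact hx' p (Or.inl (Or.inl (Or.inl hp)))
    have hrep : repMat Q (RingHom.id k) g0 = 1 := by
      ext a' b'
      have h3 := hx' _ (Or.inr ⟨(a', b'), rfl⟩ :
        (Q (Sum.inl (a', b')) - C (if a' = b' then 1 else 0)) ∈ S)
      simp only [_root_.map_sub, eval_C, sub_eq_zero] at h3
      have h4 : repMat Q (RingHom.id k) g0 a' b' = eval x (Q (Sum.inl (a', b'))) := by
        rw [repMat, hcoords]; rfl
      rw [h4, h3, Matrix.one_apply]
    have h1 : g0 = 1 := hρ_faithful g0 hmem hrep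
    have h2 : x (Sum.inl (a, b)) = if a = b then 1 else 0 := by
      have hval : (g0 : Matrix (Fin n) (Fin n) k) = 1 := Units.val_eq_one.mpr h1
      have hent : (g0 : Matrix (Fin n) (Fin n) k) a b =
          (1 : Matrix (Fin n) (Fin n) k) a b := by rw [hval]
      simpa [hg0def, Matrix.one_apply] using hent
    simp [h2]
  -- evaluate the radical membership at `s i`
  have hentry : ∀ a b : Fin n, (s i : Matrix (Fin n) (Fin n) Γ(X, U i)) a b =
      (1 : Matrix (Fin n) (Fin n) Γ(X, U i)) a b ∨ Subsingleton Γ(X, U i) := by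
    intro a b
    by_cases hne : Nonempty (U i)
    · left
      obtain ⟨N, hN⟩ := key a b
      have h0 : (eval₂Hom φ w (MvPolynomial.X (Sum.inl (a, b)) - C (if a = b then 1 else 0))) ^ N = 0 := by
        rw [← map_pow]
        exact hJker hN
      have hnil : IsNilpotent (eval₂Hom φ w (MvPolynomial.X (Sum.inl (a, b)) - C (if a = b then 1 else 0))) :=
        ⟨N, h0⟩
      haveI : IsDomain Γ(X, U i) := inferInstance
      have hz := hnil.eq_zero
      have h5 : eval₂Hom φ w (MvPolynomial.X (Sum.inl (a, b)) - C (if a = b then 1 else 0)) =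
          (s i : Matrix (Fin n) (Fin n) Γ(X, U i)) a b - φ (if a = b then 1 else 0) := by
        show eval₂ φ w _ = _
        rw [eval₂_sub, eval₂_X, eval₂_C]
        rfl
      rw [h5, sub_eq_zero] at hz
      rw [hz, Matrix.one_apply, apply_ite φ, _root_.map_one, _root_.map_zero]
    · right
      have hUbot : U i = ⊥ := by
        ext p
        simp only [TopologicalSpace.Opens.coe_bot, Set.mem_empty_iff_false, iff_false]
        intro hp
        exact hne ⟨⟨p, hp⟩⟩
      exact CommRingCat.subsingleton_of_isTerminal (X.sheaf.isTerminalOfEqEmpty hUbot)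
  apply Units.ext
  ext a b
  rcases hentry a b with h | hsub
  · exact h
  · exact Subsingleton.elim _ _
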